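/- Let b, d be real numbers with b > 1 and d > 0, let r be a natural number, and let m : {1,…,r} → ℝ with mᵢ ≥ 2 for each i. Set s₁ := ∑ᵢ (1 − 1/mᵢ) and s₂ := ∑ᵢ (1 − 1/mᵢ)². Define K² := d·(8(b−1)² + 8(b−1)s₁ − 2(b−1)s₂) and e := d·(4(b−1)² + 2(b−1)s₁). Then e > 0 and K²/e = 2 + (∑ᵢ (1 − 1/mᵢ²)) / (2(b−1) + s₁). -/
import Mathlib


theorem very_simple_kodaira_slope_formula
    (b d : ℝ) (hb : 1 < b) (hd : 0 < d) (r : ℕ) (m : Fin r → ℝ)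
    (hm : ∀ i, 2 ≤ m i)
    (s₁ s₂ K2 e : ℝ)
    (hs₁ : s₁ = ∑ i : Fin r, (1 - 1 / m i))
    (hs₂ : s₂ = ∑ i : Fin r, (1 - 1 / m i) ^ 2)
    (hK : K2 = d * (8 * (b - 1) ^ 2 + 8 * (b - 1) * s₁ - 2 * (b - 1) * s₂))
    (he : e = d * (4 * (b - 1) ^ 2 + 2 * (b - 1) * s₁)) :
    0 < e ∧
    K2 / e = 2 + (∑ i : Fin r, (1 - 1 / (m i) ^ 2)) / (2 * (b - 1) + s₁) := by
  have hs₁nonneg : 0 ≤ s₁ := by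
    rw [hs₁]
    apply Finset.sum_nonneg
    intro i _
    have h2 : (2 : ℝ) ≤ m i := hm i
    have hpos : (0 : ℝ) < m i := by linarith
    have : 1 / m i ≤ 1 / 2 := by
      apply one_div_le_one_div_of_le <;> linarith
    linarith
  have hb1 : 0 < b - 1 := by linarith
  have hepos : 0 < e := by
    rw [he]
    apply mul_pos hd
    nlinarith
  refine ⟨hepos, ?_⟩
  have hsum : ∑ i : Fin r, (1 - 1 / (m i) ^ 2) = 2 * s₁ - s₂ := by
    rw [hs₁, hs₂, Finset.mul_sum, ← Finset.sum_sub_distrib]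
    apply Finset.sum_congr rfl
    intro i _
    have hne : m i ≠ 0 := by have := hm i; linarith
    field_simp
    ring
  rw [hsum]
  have hden : 2 * (b - 1) + s₁ ≠ 0 := by positivity
  have hene : e ≠ 0 := ne_of_gt hepos
  rw [div_eq_iff hene, hK, he]
  field_simp
  ring
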